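/- Let μ ∈ L¹_res and ν ∈ gl_res. Then both products μν and νμ belong to L¹_res (i.e. L¹_res is a two-sided ideal of the associative algebra gl_res). -/

import Mathlib

set_option maxHeartbeats 1000000
open ContinuousLinearMap


noncomputable section

variable {H : Type*} [NormedAddCommGroup H] [InnerProductSpace ℂ H] [CompleteSpace H]

/-- Hilbert–Schmidt operator (with respect to the Hilbert basis `b`). -/
def IsHS {ι : Type*} (b : HilbertBasis ι ℂ H) (T : H →L[ℂ] H) : Prop :=
  Summable fun i => ‖T (b i)‖ ^ 2

/-- Trace-class operator: a product of two Hilbert–Schmidt operators. -/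
def IsTC {ι : Type*} (b : HilbertBasis ι ℂ H) (T : H →L[ℂ] H) : Prop :=
  ∃ A B : H →L[ℂ] H, IsHS b A ∧ IsHS b B ∧ T = A * B

section lems
variable {ι : Type*} (b : HilbertBasis ι ℂ H)

lemma parseval (x : H) : HasSum (fun i => ‖(inner ℂ (b i) x : ℂ)‖ ^ 2) (‖x‖ ^ 2) := by
  have h := b.hasSum_inner_mul_inner x x
  have h2 : ∀ i, (inner ℂ x (b i) : ℂ) * inner ℂ (b i) x = ((‖(inner ℂ (b i) x : ℂ)‖ ^ 2 : ℝ) : ℂ) := by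
    intro i
    rw [← inner_conj_symm x (b i), RCLike.conj_mul]
    norm_cast
  rw [inner_self_eq_norm_sq_to_K] at h
  rw [← Complex.hasSum_ofReal]
  simp only [h2] at h
  convert h using 2 <;> norm_cast

lemma hs_congr {S T : H →L[ℂ] H} (h : S = T) (hS : IsHS b S) : IsHS b T := h ▸ hS

lemma hs_mul_left (C : H →L[ℂ] H) {T : H →L[ℂ] H} (h : IsHS b T) : IsHS b (C * T) := by
  refine Summable.of_nonneg_of_le (fun i => by positivity) (fun i => ?_) (h.mul_left (‖C‖ ^ 2))
  calc ‖(C * T) (b i)‖ ^ 2 = ‖C (T (b i))‖ ^ 2 := rfl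
    _ ≤ (‖C‖ * ‖T (b i)‖) ^ 2 := by
        apply pow_le_pow_left₀ (norm_nonneg _) (C.le_opNorm _)
    _ = ‖C‖ ^ 2 * ‖T (b i)‖ ^ 2 := by ring

lemma hs_adjoint {T : H →L[ℂ] H} (h : IsHS b T) : IsHS b (adjoint T) := by
  set F : ι × ι → ℝ := fun p => ‖(inner ℂ (b p.2) (T (b p.1)) : ℂ)‖ ^ 2 with hF
  have hFnn : 0 ≤ F := fun p => by positivity
  have h1 : ∀ i, HasSum (fun j => F (i, j)) (‖T (b i)‖ ^ 2) := fun i => parseval b (T (b i))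
  have hsum : Summable F := by
    refine (summable_prod_of_nonneg hFnn).2 ⟨fun i => (h1 i).summable, ?_⟩
    refine Summable.congr h fun i => ?_
    exact ((h1 i).tsum_eq).symm
  have hswap : Summable fun p : ι × ι => F (p.2, p.1) :=
    ((Equiv.prodComm ι ι).summable_iff).2 hsum
  have h3 := (summable_prod_of_nonneg (f := fun p : ι × ι => F (p.2, p.1))
    (fun p => hFnn (p.2, p.1))).1 hswap
  refine Summable.congr h3.2 fun j => ?_
  have h4 : HasSum (fun i => F (i, j)) (‖adjoint T (b j)‖ ^ 2) := by
    have h5 := parseval b (adjoint T (b j))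
    refine h5.congr_fun fun i => ?_
    simp only [hF]
    rw [← adjoint_inner_left, norm_inner_symm]
  exact h4.tsum_eq

lemma hs_mul_right {T : H →L[ℂ] H} (h : IsHS b T) (C : H →L[ℂ] H) : IsHS b (T * C) := by
  have h1 : IsHS b (adjoint C * adjoint T) := hs_mul_left b _ (hs_adjoint b h)
  have h2 := hs_adjoint b h1
  refine hs_congr b ?_ h2
  simp only [ContinuousLinearMap.mul_def, adjoint_comp, adjoint_adjoint]

lemma hs_add {S T : H →L[ℂ] H} (hS : IsHS b S) (hT : IsHS b T) : IsHS b (S + T) := by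
  refine Summable.of_nonneg_of_le (fun i => by positivity) (fun i => ?_)
    ((hS.mul_left 2).add (hT.mul_left 2))
  have h1 : ‖(S + T) (b i)‖ ≤ ‖S (b i)‖ + ‖T (b i)‖ := by
    simpa using norm_add_le (S (b i)) (T (b i))
  nlinarith [norm_nonneg (S (b i)), norm_nonneg (T (b i)), norm_nonneg ((S + T) (b i)),
    sq_nonneg (‖S (b i)‖ - ‖T (b i)‖), h1]

lemma hs_neg {T : H →L[ℂ] H} (hT : IsHS b T) : IsHS b (-T) := by
  refine Summable.congr hT fun i => ?_
  simp

end lems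

section tclems
variable {ι : Type*} (b : HilbertBasis ι ℂ H)

lemma tc_congr {S T : H →L[ℂ] H} (h : S = T) (hS : IsTC b S) : IsTC b T := h ▸ hS

lemma tc_of_hs_hs {A B : H →L[ℂ] H} (hA : IsHS b A) (hB : IsHS b B) : IsTC b (A * B) :=
  ⟨A, B, hA, hB, rfl⟩

lemma tc_hs {T : H →L[ℂ] H} (h : IsTC b T) : IsHS b T := by
  obtain ⟨A, B, hA, _, rfl⟩ := h
  exact hs_mul_right b hA B

lemma tc_mul_left (C : H →L[ℂ] H) {T : H →L[ℂ] H} (h : IsTC b T) : IsTC b (C * T) := by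
  obtain ⟨A, B, hA, hB, rfl⟩ := h
  exact ⟨C * A, B, hs_mul_left b C hA, hB, by rw [mul_assoc]⟩

lemma tc_mul_right {T : H →L[ℂ] H} (h : IsTC b T) (C : H →L[ℂ] H) : IsTC b (T * C) := by
  obtain ⟨A, B, hA, hB, rfl⟩ := h
  exact ⟨A, B * C, hA, hs_mul_right b hB C, by rw [mul_assoc]⟩

/-- The isometry of `H` induced by an injection of the index set of a Hilbert basis. -/
def wIso {f : ι → ι} (hf : Function.Injective f) : H →ₗᵢ[ℂ] H :=
  (((b.orthonormal.comp f hf).orthogonalFamily).linearIsometry).comp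
    b.repr.toLinearIsometry

lemma wIso_hasSum {f : ι → ι} (hf : Function.Injective f) (x : H) :
    HasSum (fun i => b.repr x i • b (f i)) (wIso b hf x) := by
  have h := ((b.orthonormal.comp f hf).orthogonalFamily).hasSum_linearIsometry (b.repr x)
  refine h.congr_fun fun i => ?_
  simp [LinearIsometry.toSpanSingleton_apply, Function.comp]

lemma inner_basis_wIso {f : ι → ι} (hf : Function.Injective f) {k : ι}
    (hk : k ∉ Set.range f) (y : H) : (inner ℂ (b k) (wIso b hf y) : ℂ) = 0 := by
  have h := (wIso_hasSum b hf y).mapL (innerSL ℂ (b k))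
  have h0 : HasSum (fun _ : ι => (0 : ℂ)) ((innerSL ℂ (b k)) (wIso b hf y)) := by
    refine h.congr_fun fun j => ?_
    rw [innerSL_apply_apply, inner_smul_right, b.orthonormal.2, mul_zero]
    exact fun hkj => hk ⟨j, hkj.symm⟩
  simpa using h0.unique hasSum_zero

lemma inner_wIso_wIso {f g : ι → ι} (hf : Function.Injective f) (hg : Function.Injective g)
    (hd : ∀ i j, f i ≠ g j) (x y : H) :
    (inner ℂ (wIso b hg x) (wIso b hf y) : ℂ) = 0 := by
  rw [← inner_conj_symm]
  have h := (wIso_hasSum b hf y).mapL (innerSL ℂ (wIso b hg x))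
  have h0 : HasSum (fun _ : ι => (0 : ℂ)) ((innerSL ℂ (wIso b hg x)) (wIso b hf y)) := by
    refine h.congr_fun fun j => ?_
    rw [innerSL_apply_apply, inner_smul_right, ← inner_conj_symm,
      inner_basis_wIso b hg (fun hmem => by obtain ⟨i, hi⟩ := hmem; exact hd j i hi.symm) x]
    simp
  have := h0.unique hasSum_zero
  rw [innerSL_apply_apply] at this
  simp [this]

lemma adj_wIso_wIso {f g : ι → ι} (hf : Function.Injective f) (hg : Function.Injective g)
    (hd : ∀ i j, f i ≠ g j) :
    adjoint (wIso b hg).toContinuousLinearMap * (wIso b hf).toContinuousLinearMap = 0 := by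
  ext x
  refine ext_inner_left ℂ fun v => ?_
  rw [ContinuousLinearMap.mul_apply, adjoint_inner_right]
  simp only [LinearIsometry.coe_toContinuousLinearMap, ContinuousLinearMap.zero_apply,
    inner_zero_right]
  exact inner_wIso_wIso b hf hg hd v x

lemma adj_wIso_self {f : ι → ι} (hf : Function.Injective f) :
    adjoint (wIso b hf).toContinuousLinearMap * (wIso b hf).toContinuousLinearMap = 1 := by
  ext x
  refine ext_inner_left ℂ fun v => ?_
  rw [ContinuousLinearMap.mul_apply, adjoint_inner_right]
  simp only [LinearIsometry.coe_toContinuousLinearMap, ContinuousLinearMap.one_apply]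
  exact (wIso b hf).inner_map_map v x

lemma tc_add {S T : H →L[ℂ] H} (hS : IsTC b S) (hT : IsTC b T) : IsTC b (S + T) := by
  obtain ⟨A₁, B₁, hA₁, hB₁, rfl⟩ := hS
  obtain ⟨A₂, B₂, hA₂, hB₂, rfl⟩ := hT
  rcases finite_or_infinite ι with hfin | hinf
  · have hall : ∀ X : H →L[ℂ] H, IsHS b X := fun X => Summable.of_finite
    exact ⟨A₁ * B₁ + A₂ * B₂, 1, hall _, hall _, (mul_one _).symm⟩
  · obtain ⟨e⟩ : Nonempty (ι ⊕ ι ≃ ι) := by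
      refine Cardinal.eq.1 ?_
      simp [Cardinal.mk_sum, Cardinal.lift_id,
        Cardinal.add_eq_self (Cardinal.aleph0_le_mk ι)]
    have hf₁ : Function.Injective (fun i => e (Sum.inl i) : ι → ι) :=
      fun i j h => by simpa using e.injective h
    have hf₂ : Function.Injective (fun i => e (Sum.inr i) : ι → ι) :=
      fun i j h => by simpa using e.injective h
    have hd : ∀ i j, (fun i => e (Sum.inl i)) i ≠ (fun i => e (Sum.inr i)) j :=
      fun i j h => by simpa using e.injective h
    have hd' : ∀ i j, (fun i => e (Sum.inr i)) i ≠ (fun i => e (Sum.inl i)) j :=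
      fun i j h => by simpa using e.injective h
    set W₁ := (wIso b hf₁).toContinuousLinearMap with hW₁
    set W₂ := (wIso b hf₂).toContinuousLinearMap with hW₂
    have r11 : adjoint W₁ * W₁ = 1 := adj_wIso_self b hf₁
    have r22 : adjoint W₂ * W₂ = 1 := adj_wIso_self b hf₂
    have r12 : adjoint W₁ * W₂ = 0 := adj_wIso_wIso b hf₂ hf₁ hd'
    have r21 : adjoint W₂ * W₁ = 0 := adj_wIso_wIso b hf₁ hf₂ hd
    refine ⟨A₁ * adjoint W₁ + A₂ * adjoint W₂, W₁ * B₁ + W₂ * B₂,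
      hs_add b (hs_mul_right b hA₁ _) (hs_mul_right b hA₂ _),
      hs_add b (hs_mul_left b _ hB₁) (hs_mul_left b _ hB₂), ?_⟩
    have e11 : ∀ X : H →L[ℂ] H, adjoint W₁ * (W₁ * X) = X := fun X => by
      rw [← mul_assoc, r11, one_mul]
    have e22 : ∀ X : H →L[ℂ] H, adjoint W₂ * (W₂ * X) = X := fun X => by
      rw [← mul_assoc, r22, one_mul]
    have e12 : ∀ X : H →L[ℂ] H, adjoint W₁ * (W₂ * X) = 0 := fun X => by
      rw [← mul_assoc, r12, zero_mul]
    have e21 : ∀ X : H →L[ℂ] H, adjoint W₂ * (W₁ * X) = 0 := fun X => by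
      rw [← mul_assoc, r21, zero_mul]
    simp only [mul_add, add_mul, mul_assoc, e11, e22, e12, e21, mul_zero, add_zero, zero_add]

end tclems

lemma blocks (P : H →L[ℂ] H) (hP : P * P = P) (R S X Y : H →L[ℂ] H) :
    R * (X * Y) * S = R * X * P * (P * Y * S) + R * X * (1 - P) * ((1 - P) * Y * S) := by
  have hQ : (1 - P) * (1 - P) = 1 - P := by
    simp only [mul_sub, sub_mul, one_mul, mul_one, hP]
    abel
  calc R * (X * Y) * S
      = R * X * ((P * P) * (Y * S)) + R * X * (((1 - P) * (1 - P)) * (Y * S)) := by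
        rw [hP, hQ]; noncomm_ring
    _ = R * X * P * (P * Y * S) + R * X * (1 - P) * ((1 - P) * Y * S) := by noncomm_ring


/-- The trace with respect to the Hilbert basis `b`. -/
def trB {ι : Type*} (b : HilbertBasis ι ℂ H) (T : H →L[ℂ] H) : ℂ :=
  ∑' i, (inner ℂ (b i) (T (b i)) : ℂ)

/-- Membership in the restricted algebra `gl_res`: the commutator `[T, P]` is
Hilbert–Schmidt. -/
def InGlres {ι : Type*} (b : HilbertBasis ι ℂ H) (P T : H →L[ℂ] H) : Prop :=
  IsHS b (T * P - P * T)

/-- Membership in `L¹_res`: the diagonal blocks `T₊₊ = P T P`, `T₋₋ = (1-P) T (1-P)`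
are trace class and the off-diagonal blocks `T₊₋ = P T (1-P)`, `T₋₊ = (1-P) T P`
are Hilbert–Schmidt. -/
def InL1res {ι : Type*} (b : HilbertBasis ι ℂ H) (P T : H →L[ℂ] H) : Prop :=
  IsTC b (P * T * P) ∧ IsTC b ((1 - P) * T * (1 - P)) ∧
    IsHS b (P * T * (1 - P)) ∧ IsHS b ((1 - P) * T * P)

/-- The restricted trace `Tr_res T = Tr T₊₊ + Tr T₋₋`. -/
def trRes {ι : Type*} (b : HilbertBasis ι ℂ H) (P T : H →L[ℂ] H) : ℂ :=
  trB b (P * T * P) + trB b ((1 - P) * T * (1 - P))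

/-- `L¹_res` is a two-sided ideal of `gl_res`: if `μ ∈ L¹_res` and
`ν ∈ gl_res` then `μν, νμ ∈ L¹_res`. -/
theorem stmt0 [TopologicalSpace.SeparableSpace H]
    (P : H →L[ℂ] H) (hPsa : IsSelfAdjoint P) (hPidem : IsIdempotentElem P)
    {ι : Type*} (b : HilbertBasis ι ℂ H) (μ ν : H →L[ℂ] H)
    (hμ : InL1res b P μ) (hν : InGlres b P ν) :
    InL1res b P (μ * ν) ∧ InL1res b P (ν * μ) := by
  obtain ⟨hμpp, hμmm, hμpm, hμmp⟩ := hμ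
  have hP : P * P = P := hPidem
  have hνmp : IsHS b ((1 - P) * ν * P) := by
    refine hs_congr b ?_ (hs_mul_right b hν P)
    calc (ν * P - P * ν) * P = ν * (P * P) - P * ν * P := by noncomm_ring
      _ = (1 - P) * ν * P := by rw [hP]; noncomm_ring
  have hνpm : IsHS b (P * ν * (1 - P)) := by
    refine hs_congr b ?_ (hs_neg b (hs_mul_left b P hν))
    calc -(P * (ν * P - P * ν)) = P * (P * ν) - P * ν * P := by noncomm_ring
      _ = P * ν * (1 - P) := by rw [← mul_assoc, hP]; noncomm_ring
  refine ⟨⟨?_, ?_, ?_, ?_⟩, ⟨?_, ?_, ?_, ?_⟩⟩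
  · exact tc_congr b (blocks P hP P P μ ν).symm
      (tc_add b (tc_mul_right b hμpp _) (tc_of_hs_hs b hμpm hνmp))
  · exact tc_congr b (blocks P hP (1 - P) (1 - P) μ ν).symm
      (tc_add b (tc_of_hs_hs b hμmp hνpm) (tc_mul_right b hμmm _))
  · exact hs_congr b (blocks P hP P (1 - P) μ ν).symm
      (hs_add b (hs_mul_right b (tc_hs b hμpp) _) (hs_mul_right b hμpm _))
  · exact hs_congr b (blocks P hP (1 - P) P μ ν).symm
      (hs_add b (hs_mul_right b hμmp _) (hs_mul_right b (tc_hs b hμmm) _))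
  · exact tc_congr b (blocks P hP P P ν μ).symm
      (tc_add b (tc_mul_left b _ hμpp) (tc_of_hs_hs b hνpm hμmp))
  · exact tc_congr b (blocks P hP (1 - P) (1 - P) ν μ).symm
      (tc_add b (tc_of_hs_hs b hνmp hμpm) (tc_mul_left b _ hμmm))
  · exact hs_congr b (blocks P hP P (1 - P) ν μ).symm
      (hs_add b (hs_mul_left b _ hμpm) (hs_mul_right b hνpm _))
  · exact hs_congr b (blocks P hP (1 - P) P ν μ).symm
      (hs_add b (hs_mul_right b hνmp _) (hs_mul_left b _ hμmp))
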